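/- Let F : ℝ^p → ℝ^p be L-Lipschitz continuous with a zero x*, and suppose ⟨Fx, x - x*⟩ ≥ -ρ‖Fx‖² for all x, with L·ρ ≤ β²/16 for some β ∈ (0,1]. Let the sequence be generated by the extragradient method: y^k := x^k - (η/β)Fx^k, x^{k+1} := x^k - η F(y^k), with stepsize η satisfying (β - √(β² - 16Lρ))/(2L) < η < (β + √(β² - 16Lρ))/(2L). Then C₁ := β - Lη - 4ρ/η > 0 and for every K ≥ 0: min_{0≤k≤K} ‖Fx^k‖² ≤ (1/(K+1)) Σ_{k=0}^K ‖Fx^k‖² ≤ β²‖x⁰ - x*‖²/(C₁η²(K+1)). -/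

import Mathlib

set_option maxHeartbeats 1000000
open scoped RealInnerProductSpace
open Finset


lemma key_scalar (a b c s β ρ η : ℝ) (ha : 0 ≤ a) (hb : 0 ≤ b) (hc : 0 ≤ c)
    (hβ0 : 0 < β) (hβ1 : β ≤ 1) (hρ0 : 0 ≤ ρ) (hη : 0 < η)
    (hs0 : 0 < s) (hsβ : s < β) (hρη : 4*ρ ≤ η*(β-s))
    (h1 : β*c ≤ s*a) (h2 : β*b ≤ (β+s)*a) :
    β^2*η*c^2 + β^2*(β*η + 2*ρ*β - η)*b^2 ≤ β*(s*η+4*ρ)*a^2 := by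
  have hc2 : β^2*c^2 ≤ s^2*a^2 := by
    nlinarith [mul_le_mul h1 h1 (by positivity) (mul_nonneg hs0.le ha)]
  have hb2 : β^2*b^2 ≤ (β+s)^2*a^2 := by
    nlinarith [mul_le_mul h2 h2 (by positivity) (by positivity : (0:ℝ) ≤ (β+s)*a)]
  have t1 : β^2*η*c^2 ≤ η*(s^2*a^2) := by nlinarith
  rcases le_or_gt (β*η + 2*ρ*β - η) 0 with hm | hm
  · have t2 : β^2*(β*η + 2*ρ*β - η)*b^2 ≤ 0 := by
      have e : β^2*(β*η + 2*ρ*β - η)*b^2 = (β*η + 2*ρ*β - η)*(β^2*b^2) := by ring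
      rw [e]
      exact mul_nonpos_of_nonpos_of_nonneg hm (by positivity)
    nlinarith [mul_nonneg (mul_nonneg (mul_nonneg hs0.le hη.le) (sub_nonneg.2 hsβ.le)) (mul_nonneg ha ha),
      mul_nonneg (mul_nonneg hρ0 hβ0.le) (mul_nonneg ha ha)]
  · have t2 : β^2*(β*η + 2*ρ*β - η)*b^2 ≤ (β*η + 2*ρ*β - η)*((β+s)^2*a^2) := by
      have e : β^2*(β*η + 2*ρ*β - η)*b^2 = (β*η + 2*ρ*β - η)*(β^2*b^2) := by ring
      rw [e]
      exact mul_le_mul_of_nonneg_left hb2 hm.le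
    have hbr : η*s^2 + (β*η + 2*ρ*β - η)*(β+s)^2 ≤ β*(s*η+4*ρ) := by
      rcases le_or_gt ((β+s)^2) 2 with hu | hu
      · nlinarith [mul_nonneg (mul_nonneg hρ0 hβ0.le) (sub_nonneg.2 hu),
          mul_nonneg (mul_nonneg hη.le (sub_nonneg.2 hβ1)) (sq_nonneg (β+s)),
          mul_nonneg (mul_nonneg hs0.le hη.le) (sub_nonneg.2 hsβ.le)]
      · have hu0 : (0:ℝ) ≤ (β+s)^2 - 2 := by linarith
        have s1 : 2*ρ*β*((β+s)^2-2) ≤ 2*ρ*((β+s)^2-2) := by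
          nlinarith [mul_nonneg (mul_nonneg hρ0 (sub_nonneg.2 hβ1)) hu0]
        have s2 : 4*ρ*((β+s)^2-2) ≤ η*(β-s)*((β+s)^2-2) :=
          mul_le_mul_of_nonneg_right hρη hu0
        have s3 : η*(β-s)*((β+s)^2-2) ≤ 2*(s*η*(β-s)) + 2*(η*(1-β)*(β+s)^2) := by
          have key1 : (β+s)^2 - 2 - 2*s ≤ 0 := by
            nlinarith [mul_nonneg hs0.le (sub_nonneg.2 hβ1)]
          have k2 : η*(β-s)*((β+s)^2-2-2*s) ≤ 0 :=
            mul_nonpos_of_nonneg_of_nonpos (mul_nonneg hη.le (by linarith)) key1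
          nlinarith [k2, mul_nonneg (mul_nonneg hη.le (sub_nonneg.2 hβ1)) (sq_nonneg (β+s))]
        linarith [s1, s2, s3]
    have := mul_le_mul_of_nonneg_right hbr (mul_nonneg ha ha)
    nlinarith


lemma step_lemma {p : ℕ}
    (F : EuclideanSpace ℝ (Fin p) → EuclideanSpace ℝ (Fin p))
    (L : ℝ) (hL0 : 0 < L) (hL : ∀ a b, ‖F a - F b‖ ≤ L * ‖a - b‖)
    (xs : EuclideanSpace ℝ (Fin p))
    (ρ : ℝ) (hρ : 0 ≤ ρ)
    (hwm : ∀ z, -ρ * ‖F z‖ ^ 2 ≤ ⟪F z, z - xs⟫)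
    (β : ℝ) (hβ0 : 0 < β) (hβ1 : β ≤ 1)
    (η : ℝ) (hη0 : 0 < η) (hsβ : L*η < β) (hρη : 4*ρ ≤ η*(β - L*η))
    (x y : ℕ → EuclideanSpace ℝ (Fin p))
    (hy : ∀ k, y k = x k - (η / β) • F (x k))
    (hx : ∀ k, x (k + 1) = x k - η • F (y k)) (k : ℕ) :
    ‖x (k+1) - xs‖^2 + ((β - L*η - 4*ρ/η)*η^2/β^2) * ‖F (x k)‖^2 ≤ ‖x k - xs‖^2 := by
  set a := ‖F (x k)‖ with hadef
  set b := ‖F (y k)‖ with hbdef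
  set c := ‖F (x k) - F (y k)‖ with hcdef
  have ha : 0 ≤ a := norm_nonneg _
  have hb : 0 ≤ b := norm_nonneg _
  have hc : 0 ≤ c := norm_nonneg _
  have e1 : x (k+1) - xs = (x k - xs) - η • F (y k) := by rw [hx k]; abel
  have e2 : ‖x (k+1) - xs‖^2
      = ‖x k - xs‖^2 - 2*(η*⟪F (y k), x k - xs⟫) + η^2*b^2 := by
    rw [e1, norm_sub_sq_real, real_inner_smul_right, norm_smul, mul_pow, real_inner_comm]
    simp [Real.norm_eq_abs, sq_abs, hbdef]
  have e3 : x k - xs = (η/β) • F (x k) + (y k - xs) := by rw [hy k]; abel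
  have e4 : ⟪F (y k), x k - xs⟫
      = (η/β)*⟪F (y k), F (x k)⟫ + ⟪F (y k), y k - xs⟫ := by
    rw [e3, inner_add_right, real_inner_smul_right]
  have e5 : 2*⟪F (y k), F (x k)⟫ = a^2 + b^2 - c^2 := by
    have h := norm_sub_sq_real (F (x k)) (F (y k))
    rw [real_inner_comm]
    simp only [← hadef, ← hbdef, ← hcdef] at h
    linarith
  have f3 : -ρ*b^2 ≤ ⟪F (y k), y k - xs⟫ := hwm (y k)
  have f4 : β*c ≤ (L*η)*a := by
    have h1 : x k - y k = (η/β) • F (x k) := by rw [hy k]; abel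
    have h2 : ‖x k - y k‖ = (η/β)*a := by
      rw [h1, norm_smul, Real.norm_eq_abs, abs_of_pos (div_pos hη0 hβ0)]
    have h3 := hL (x k) (y k)
    rw [h2] at h3
    have h4 : c ≤ L*((η/β)*a) := h3
    have := mul_le_mul_of_nonneg_left h4 hβ0.le
    calc β*c ≤ β*(L*((η/β)*a)) := this
      _ = (L*η)*a := by field_simp
  have f5 : b ≤ a + c := by
    calc b = ‖F (x k) - (F (x k) - F (y k))‖ := by rw [hbdef]; congr 1; abel
      _ ≤ a + c := norm_sub_le _ _
  -- key scalar inequality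
  have hk := key_scalar a b c (L*η) β ρ η ha hb hc hβ0 hβ1 hρ hη0
    (mul_pos hL0 hη0) hsβ hρη f4 (by nlinarith)
  -- from e2, e4, f3:
  have e6 : ‖x (k+1) - xs‖^2 ≤ ‖x k - xs‖^2 - (η^2/β)*(a^2+b^2-c^2) + 2*η*ρ*b^2 + η^2*b^2 := by
    rw [e2, e4]
    have h1 : -(2*(η*⟪F (y k), y k - xs⟫)) ≤ 2*η*ρ*b^2 := by
      have := mul_le_mul_of_nonneg_left f3 (by linarith : (0:ℝ) ≤ 2*η)
      nlinarith [this]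
    have h2 : 2*(η*((η/β)*⟪F (y k), F (x k)⟫)) = (η^2/β)*(a^2+b^2-c^2) := by
      have : 2*(η*((η/β)*⟪F (y k), F (x k)⟫)) = (η*(η/β))*(2*⟪F (y k), F (x k)⟫) := by ring
      rw [this, e5]; ring
    nlinarith [h1, h2]
  -- conclude via factor identity
  have hfac : (‖x k - xs‖^2 - ((β - L*η - 4*ρ/η)*η^2/β^2) * a^2)
      - (‖x k - xs‖^2 - (η^2/β)*(a^2+b^2-c^2) + 2*η*ρ*b^2 + η^2*b^2)
      = (η/β^3) * (β*((L*η)*η+4*ρ)*a^2 - (β^2*η*c^2 + β^2*(β*η + 2*ρ*β - η)*b^2)) := by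
    field_simp
    ring
  have hnn : 0 ≤ (η/β^3) * (β*((L*η)*η+4*ρ)*a^2 - (β^2*η*c^2 + β^2*(β*η + 2*ρ*β - η)*b^2)) :=
    mul_nonneg (by positivity) (by linarith)
  linarith


theorem eg_best_iterate_rate {p : ℕ}
    (F : EuclideanSpace ℝ (Fin p) → EuclideanSpace ℝ (Fin p))
    (L : ℝ) (hL0 : 0 < L) (hL : ∀ a b, ‖F a - F b‖ ≤ L * ‖a - b‖)
    (xs : EuclideanSpace ℝ (Fin p)) (hxs : F xs = 0)
    (ρ : ℝ) (hρ : 0 ≤ ρ)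
    (hwm : ∀ z, -ρ * ‖F z‖ ^ 2 ≤ ⟪F z, z - xs⟫)
    (β : ℝ) (hβ0 : 0 < β) (hβ1 : β ≤ 1)
    (hLρ : L * ρ ≤ β ^ 2 / 16)
    (η : ℝ)
    (hη₁ : (β - Real.sqrt (β ^ 2 - 16 * L * ρ)) / (2 * L) < η)
    (hη₂ : η < (β + Real.sqrt (β ^ 2 - 16 * L * ρ)) / (2 * L))
    (x y : ℕ → EuclideanSpace ℝ (Fin p))
    (hy : ∀ k, y k = x k - (η / β) • F (x k))
    (hx : ∀ k, x (k + 1) = x k - η • F (y k)) :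
    0 < β - L * η - 4 * ρ / η ∧
      ∀ K : ℕ,
        (∃ k ≤ K, ‖F (x k)‖ ^ 2 ≤
            (1 / ((K : ℝ) + 1)) * ∑ j ∈ range (K + 1), ‖F (x j)‖ ^ 2) ∧
        (1 / ((K : ℝ) + 1)) * ∑ k ∈ range (K + 1), ‖F (x k)‖ ^ 2 ≤
          β ^ 2 * ‖x 0 - xs‖ ^ 2 /
            ((β - L * η - 4 * ρ / η) * η ^ 2 * ((K : ℝ) + 1)) := by
  have h2L : (0:ℝ) < 2*L := by linarith
  set D := Real.sqrt (β ^ 2 - 16 * L * ρ) with hDdef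
  have hD0 : 0 ≤ D := Real.sqrt_nonneg _
  have hD2 : D^2 = β^2 - 16*L*ρ := Real.sq_sqrt (by linarith)
  have hb1 : β - D < 2*L*η := by
    have := (div_lt_iff₀ h2L).mp hη₁; linarith
  have hb2 : 2*L*η < β + D := by
    have := (lt_div_iff₀ h2L).mp hη₂; linarith
  have habs : (2*L*η - β)^2 < D^2 := sq_lt_sq' (by linarith) (by linarith)
  have h4 : 4*L*(L*η^2 - β*η + 4*ρ) < 0 := by nlinarith [habs, hD2]
  have hq : L*η^2 - β*η + 4*ρ < 0 := by
    by_contra h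
    push_neg at h
    nlinarith [mul_nonneg hL0.le h]
  have hη0 : 0 < η := by
    by_contra h
    push_neg at h
    nlinarith [mul_nonneg hL0.le (sq_nonneg η), mul_nonpos_of_nonneg_of_nonpos hβ0.le h]
  have hsβ : L*η < β := by
    by_contra h
    push_neg at h
    nlinarith [mul_nonneg hη0.le (sub_nonneg.2 h)]
  have hρη : 4*ρ ≤ η*(β - L*η) := by nlinarith [hq]
  have hC1 : 0 < β - L * η - 4 * ρ / η := by
    have : 4*ρ/η < β - L*η := (div_lt_iff₀ hη0).mpr (by nlinarith [hq])
    linarith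
  refine ⟨hC1, fun K => ?_⟩
  have hstep := step_lemma F L hL0 hL xs ρ hρ hwm β hβ0 hβ1 η hη0 hsβ hρη x y hy hx
  set γ := (β - L*η - 4*ρ/η)*η^2/β^2 with hγdef
  have hγ : 0 < γ := div_pos (mul_pos hC1 (by positivity)) (by positivity)
  have tele : ∀ K : ℕ, γ * ∑ k ∈ range (K+1), ‖F (x k)‖^2 + ‖x (K+1) - xs‖^2
      ≤ ‖x 0 - xs‖^2 := by
    intro K
    induction K with
    | zero =>
      have h := hstep 0
      have e : ∑ k ∈ range (0+1), ‖F (x k)‖^2 = ‖F (x 0)‖^2 := by norm_num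
      rw [e]
      linarith
    | succ n ih =>
      rw [Finset.sum_range_succ]
      have hs := hstep (n+1)
      nlinarith [ih, hs]
  set S := ∑ k ∈ range (K+1), ‖F (x k)‖^2 with hSdef
  have hKpos : (0:ℝ) < (K:ℝ) + 1 := by positivity
  constructor
  · by_contra h
    push_neg at h
    have hlt : ∑ j ∈ range (K+1), (1/((K:ℝ)+1))*S < S := by
      refine Finset.sum_lt_sum_of_nonempty ⟨0, Finset.mem_range.2 (Nat.succ_pos K)⟩ ?_
      intro i hi
      exact h i (Nat.lt_succ_iff.mp (Finset.mem_range.mp hi))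
    have hconst : ∑ j ∈ range (K+1), (1/((K:ℝ)+1))*S = S := by
      rw [Finset.sum_const, Finset.card_range, nsmul_eq_mul]
      push_cast
      field_simp
    linarith
  · have hteleK := tele K
    have hS : γ * S ≤ ‖x 0 - xs‖^2 := by
      have h0 : (0:ℝ) ≤ ‖x (K+1) - xs‖^2 := by positivity
      linarith
    rw [le_div_iff₀ (mul_pos (mul_pos hC1 (pow_pos hη0 2)) hKpos)]
    have heq : 1/((K:ℝ)+1) * S * ((β - L*η - 4*ρ/η) * η^2 * ((K:ℝ)+1)) = β^2 * (γ*S) := by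
      rw [hγdef]
      field_simp
    rw [heq]
    have hmul := mul_le_mul_of_nonneg_left hS (by positivity : (0:ℝ) ≤ β^2)
    linarith
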